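/- If there exists an idempotent ultrafilter p (p+p = p) with p ∈ J_0(S) and A ∈ p, then A is a C-set near zero. -/
import Mathlib


open Set Filter

attribute [local instance] Ultrafilter.add

/-- `S` is a subsemigroup of `((0,∞),+)` which is dense in `(0,∞)`
    (with the usual topology of `ℝ`). -/
def DenseSubsemigroupPos (S : Set ℝ) : Prop :=
  (∀ x ∈ S, 0 < x) ∧ (∀ x ∈ S, ∀ y ∈ S, x + y ∈ S) ∧ Ioi (0 : ℝ) ⊆ closure S

/-- `0⁺(S)`: the ultrafilters (on `S`, viewed as ultrafilters on `ℝ` containing `S`)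
    all of whose members meet every interval `(0,ε)`. -/
def zeroPlus (S : Set ℝ) : Set (Ultrafilter ℝ) :=
  {p | ∀ ε > (0 : ℝ), Ioo (0 : ℝ) ε ∩ S ∈ p}

/-- `L` is a left ideal of the subsemigroup `T` of `βS_d`. -/
def IsLeftIdealIn (T L : Set (Ultrafilter ℝ)) : Prop :=
  L.Nonempty ∧ L ⊆ T ∧ ∀ p ∈ T, ∀ q ∈ L, p + q ∈ L

/-- `L` is a minimal left ideal of the subsemigroup `T` of `βS_d`. -/
def IsMinimalLeftIdealIn (T L : Set (Ultrafilter ℝ)) : Prop :=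
  IsLeftIdealIn T L ∧ ∀ L', IsLeftIdealIn T L' → L' ⊆ L → L' = L

/-- `K(T)`: the smallest two sided ideal of `T`, i.e. the union of all
    minimal left ideals of `T`. -/
def smallestIdeal (T : Set (Ultrafilter ℝ)) : Set (Ultrafilter ℝ) :=
  ⋃₀ {L | IsMinimalLeftIdealIn T L}

/-- `A` is thick near zero (as a subset of `S`). -/
def ThickNearZero (S A : Set ℝ) : Prop :=
  ∃ ε > (0 : ℝ), ∀ F : Finset ℝ, F.Nonempty → ↑F ⊆ Ioo (0 : ℝ) ε ∩ S →
    ∀ δ > (0 : ℝ), ∃ y ∈ Ioo (0 : ℝ) δ ∩ S, ∀ x ∈ F, x + y ∈ A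

/-- `A` is syndetic near zero (as a subset of `S`). -/
def SyndeticNearZero (S A : Set ℝ) : Prop :=
  ∀ ε > (0 : ℝ), ∃ F : Finset ℝ, F.Nonempty ∧ ↑F ⊆ Ioo (0 : ℝ) ε ∩ S ∧
    ∃ δ > (0 : ℝ), ∀ x ∈ Ioo (0 : ℝ) δ ∩ S, ∃ t ∈ F, t + x ∈ A

/-- `A` is piecewise syndetic near zero (as a subset of `S`). -/
def PiecewiseSyndeticNearZero (S A : Set ℝ) : Prop :=
  ∀ δ > (0 : ℝ), ∃ F : Finset ℝ, F.Nonempty ∧ ↑F ⊆ Ioo (0 : ℝ) δ ∩ S ∧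
    ThickNearZero S {y | y ∈ S ∧ ∃ t ∈ F, t + y ∈ A}

/-- `T_0`: sequences in `S` with infimum `0`. -/
def T0 (S : Set ℝ) : Set (ℕ → ℝ) :=
  {f | (∀ n, f n ∈ S) ∧ IsGLB (range f) 0}

/-- `A` is a `J`-set near zero (as a subset of `S`). -/
def JSetNearZero (S A : Set ℝ) : Prop :=
  ∀ F : Finset (ℕ → ℝ), F.Nonempty → ↑F ⊆ T0 S → ∀ δ > (0 : ℝ),
    ∃ a ∈ S ∩ Ioo (0 : ℝ) δ, ∃ H : Finset ℕ, H.Nonempty ∧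
      ∀ f ∈ F, a + ∑ t ∈ H, f t ∈ A

/-- `J_0(S)`: the members of `0⁺(S)` all of whose members are `J`-sets near zero. -/
def J0 (S : Set ℝ) : Set (Ultrafilter ℝ) :=
  {p | p ∈ zeroPlus S ∧ ∀ A : Set ℝ, A ⊆ S → A ∈ p → JSetNearZero S A}

/-- `A` is central near zero: it belongs to some idempotent in `K(0⁺(S))`. -/
def CentralNearZero (S A : Set ℝ) : Prop :=
  ∃ p : Ultrafilter ℝ, p + p = p ∧ p ∈ smallestIdeal (zeroPlus S) ∧ A ∈ p

/-- `A` is a `C`-set near zero (it satisfies the conclusion of the Central Sets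
    Theorem near zero). -/
def CSetNearZero (S A : Set ℝ) : Prop :=
  ∀ δ ∈ Ioo (0 : ℝ) 1,
    ∃ (α : Finset (ℕ → ℝ) → ℝ) (H : Finset (ℕ → ℝ) → Finset ℕ),
      (∀ F : Finset (ℕ → ℝ), F.Nonempty → ↑F ⊆ T0 S →
        α F ∈ S ∧ α F < δ ∧ (H F).Nonempty) ∧
      (∀ F G : Finset (ℕ → ℝ), F.Nonempty → ↑F ⊆ T0 S → G.Nonempty → ↑G ⊆ T0 S →
        F ⊂ G → ∀ i ∈ H F, ∀ j ∈ H G, i < j) ∧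
      (∀ m : ℕ, ∀ G : Fin (m + 1) → Finset (ℕ → ℝ), ∀ f : Fin (m + 1) → ℕ → ℝ,
        (∀ i, (G i).Nonempty) → (∀ i, ↑(G i) ⊆ T0 S) →
        (∀ i j, i < j → G i ⊂ G j) → (∀ i, f i ∈ G i) →
        ∑ i, (α (G i) + ∑ t ∈ H (G i), f i t) ∈ A)

namespace CSetAux

open scoped Classical

/-- `A⋆ = {x ∈ A : -x + A ∈ p}`. -/
def aStar (A : Set ℝ) (p : Ultrafilter ℝ) : Set ℝ :=
  {x | x ∈ A ∧ {y | x + y ∈ A} ∈ p}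

lemma aStar_subset (A : Set ℝ) (p : Ultrafilter ℝ) : aStar A p ⊆ A := fun _ hx => hx.1

lemma mem_add_iff {p q : Ultrafilter ℝ} {s : Set ℝ} :
    s ∈ p + q ↔ {x | {y | x + y ∈ s} ∈ q} ∈ p :=
  Ultrafilter.eventually_add p q (· ∈ s)

lemma aStar_mem {A : Set ℝ} {p : Ultrafilter ℝ} (hpp : p + p = p) (hAp : A ∈ p) :
    aStar A p ∈ p := by
  have h1 : {x | {y | x + y ∈ A} ∈ p} ∈ p := mem_add_iff.mp (by rw [hpp]; exact hAp)
  have : aStar A p = A ∩ {x | {y | x + y ∈ A} ∈ p} := rfl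
  rw [this]
  exact Filter.inter_mem hAp h1

lemma aStar_shift {A : Set ℝ} {p : Ultrafilter ℝ} (hpp : p + p = p) {x : ℝ}
    (hx : x ∈ aStar A p) : {y | x + y ∈ aStar A p} ∈ p := by
  obtain ⟨-, hx2⟩ := hx
  have h2 : {y | {z | (x + y) + z ∈ A} ∈ p} ∈ p := by
    have h1 := mem_add_iff.mp (show {y | x + y ∈ A} ∈ p + p by rw [hpp]; exact hx2)
    convert h1 using 1
    ext y
    simp only [Set.mem_setOf_eq, add_assoc]
  have : {y | x + y ∈ aStar A p} = {y | x + y ∈ A} ∩ {y | {z | (x + y) + z ∈ A} ∈ p} := rfl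
  rw [this]
  exact Filter.inter_mem hx2 h2

lemma exists_small (S : Set ℝ) (hSpos : ∀ x ∈ S, 0 < x) {f : ℕ → ℝ} (hf : f ∈ T0 S) :
    ∀ k : ℕ, ∀ ε > (0 : ℝ), ∃ n, k ≤ n ∧ f n < ε := by
  intro k
  induction k with
  | zero =>
    intro ε hε
    by_contra h
    push_neg at h
    have : ε ∈ lowerBounds (range f) := by
      rintro _ ⟨n, rfl⟩
      exact (h n (Nat.zero_le n))
    exact absurd (hf.2.2 this) (not_le.mpr hε)
  | succ k ih =>
    intro ε hε
    have hfk : 0 < f k := hSpos _ (hf.1 k)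
    obtain ⟨n, hkn, hn⟩ := ih (min ε (f k)) (lt_min hε hfk)
    refine ⟨n, ?_, lt_of_lt_of_le hn (min_le_left _ _)⟩
    rcases Nat.lt_or_ge n (k + 1) with h | h
    · exfalso
      have : n = k := le_antisymm (Nat.lt_succ_iff.mp h) hkn
      subst this
      exact absurd (lt_of_lt_of_le hn (min_le_right _ _)) (lt_irrefl _)
    · exact h

lemma T0_shift (S : Set ℝ) (hSpos : ∀ x ∈ S, 0 < x) {f : ℕ → ℝ} (hf : f ∈ T0 S) (k : ℕ) :
    (fun n => f (n + k)) ∈ T0 S := by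
  refine ⟨fun n => hf.1 _, ?_, ?_⟩
  · rintro _ ⟨n, rfl⟩
    exact (hSpos _ (hf.1 _)).le
  · intro b hb
    by_contra hb0
    push_neg at hb0
    obtain ⟨n, hkn, hn⟩ := exists_small S hSpos hf k b hb0
    have : b ≤ f n := by
      have : f n = (fun n => f (n + k)) (n - k) := by
        simp [Nat.sub_add_cancel hkn]
      rw [this]
      exact hb ⟨n - k, rfl⟩
    exact absurd hn (not_lt.mpr this)

/-- sums over chains topped strictly below `F`. -/
def ChainSums (S : Set ℝ) (prev : Finset (ℕ → ℝ) → ℝ × Finset ℕ) (F : Finset (ℕ → ℝ)) :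
    Set ℝ :=
  {x | ∃ (m : ℕ) (G : Fin (m + 1) → Finset (ℕ → ℝ)) (f : Fin (m + 1) → ℕ → ℝ),
    (∀ i, (G i).Nonempty) ∧ (∀ i, ↑(G i) ⊆ T0 S) ∧ (∀ i j, i < j → G i ⊂ G j) ∧
    (∀ i, f i ∈ G i) ∧ G (Fin.last m) ⊂ F ∧
    x = ∑ i, ((prev (G i)).1 + ∑ t ∈ (prev (G i)).2, f i t)}

lemma chain_mem_ssub {m : ℕ} {G : Fin (m + 1) → Finset (ℕ → ℝ)} {F : Finset (ℕ → ℝ)}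
    (hmono : ∀ i j, i < j → G i ⊂ G j) (htop : G (Fin.last m) ⊂ F) (i : Fin (m + 1)) :
    G i ⊂ F := by
  rcases eq_or_lt_of_le (Fin.le_last i) with h | h
  · rw [h]; exact htop
  · exact (hmono i (Fin.last m) h).trans htop

lemma chainSums_congr {S : Set ℝ} {prev₁ prev₂ : Finset (ℕ → ℝ) → ℝ × Finset ℕ}
    {F : Finset (ℕ → ℝ)} (h : ∀ G, G ⊂ F → prev₁ G = prev₂ G) :
    ChainSums S prev₁ F = ChainSums S prev₂ F := by
  have key : ∀ (p₁ p₂ : Finset (ℕ → ℝ) → ℝ × Finset ℕ), (∀ G, G ⊂ F → p₁ G = p₂ G) →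
      ChainSums S p₁ F ⊆ ChainSums S p₂ F := by
    rintro p₁ p₂ hp x ⟨m, G, f, hne, hT, hmono, hf, htop, rfl⟩
    refine ⟨m, G, f, hne, hT, hmono, hf, htop, ?_⟩
    refine Finset.sum_congr rfl fun i _ => ?_
    rw [hp (G i) (chain_mem_ssub hmono htop i)]
  exact le_antisymm (key _ _ h) (key _ _ fun G hG => (h G hG).symm)

lemma chainSums_finite (S : Set ℝ) (prev : Finset (ℕ → ℝ) → ℝ × Finset ℕ)
    (F : Finset (ℕ → ℝ)) : (ChainSums S prev F).Finite := by
  have hsub : ChainSums S prev F ⊆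
      ⋃ m ∈ Finset.range (F.card), Set.range
        (fun (Gf : (Fin (m + 1) → {G // G ∈ F.powerset}) × (Fin (m + 1) → {f // f ∈ F})) =>
          ∑ i, ((prev (Gf.1 i : Finset (ℕ → ℝ))).1 +
            ∑ t ∈ (prev (Gf.1 i : Finset (ℕ → ℝ))).2, (Gf.2 i : ℕ → ℝ) t)) := by
    rintro x ⟨m, G, f, hne, hT, hmono, hf, htop, rfl⟩
    have hGF : ∀ i, G i ⊂ F := chain_mem_ssub hmono htop
    have hcard : ∀ i : ℕ, ∀ hi : i < m + 1, i < (G ⟨i, hi⟩).card := by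
      intro i
      induction i with
      | zero => intro hi; exact (hne _).card_pos
      | succ i ih =>
        intro hi
        have h1 := ih (Nat.lt_of_succ_lt hi)
        have h2 : G ⟨i, Nat.lt_of_succ_lt hi⟩ ⊂ G ⟨i + 1, hi⟩ := by
          apply hmono
          simp [Fin.lt_def]
        exact Nat.lt_of_le_of_lt h1 (Finset.card_lt_card h2)
    have hm : m ∈ Finset.range F.card := by
      rw [Finset.mem_range]
      have h1 : m < (G (Fin.last m)).card := hcard m (Nat.lt_succ_self m)
      have h2 : (G (Fin.last m)).card ≤ F.card := Finset.card_le_card htop.subset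
      exact lt_of_lt_of_le h1 h2
    refine Set.mem_biUnion hm ?_
    exact ⟨(fun i => ⟨G i, Finset.mem_powerset.mpr (hGF i).subset⟩,
      fun i => ⟨f i, (hGF i).subset (hf i)⟩), rfl⟩
  exact Set.Finite.subset
    (Set.Finite.biUnion (Finset.range F.card).finite_toSet fun m _ => Set.finite_range _) hsub

/-- The specification of a good choice `(α F, H F)` given previous choices. -/
def Spec (S A : Set ℝ) (p : Ultrafilter ℝ) (δ : ℝ)
    (prev : Finset (ℕ → ℝ) → ℝ × Finset ℕ) (F : Finset (ℕ → ℝ)) (v : ℝ × Finset ℕ) : Prop :=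
  v.1 ∈ S ∧ v.1 < δ ∧ v.2.Nonempty ∧
  (∀ G, G ⊂ F → ∀ i ∈ (prev G).2, ∀ j ∈ v.2, i < j) ∧
  (∀ f ∈ F, v.1 + ∑ t ∈ v.2, f t ∈ aStar A p ∧
    ∀ x ∈ ChainSums S prev F, x + (v.1 + ∑ t ∈ v.2, f t) ∈ aStar A p)

lemma spec_congr {S A : Set ℝ} {p : Ultrafilter ℝ} {δ : ℝ}
    {prev₁ prev₂ : Finset (ℕ → ℝ) → ℝ × Finset ℕ} {F : Finset (ℕ → ℝ)} {v : ℝ × Finset ℕ}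
    (h : ∀ G, G ⊂ F → prev₁ G = prev₂ G) (hs : Spec S A p δ prev₁ F v) :
    Spec S A p δ prev₂ F v := by
  obtain ⟨h1, h2, h3, h4, h5⟩ := hs
  refine ⟨h1, h2, h3, fun G hG => by rw [← h G hG]; exact h4 G hG, fun f hf => ?_⟩
  rw [← chainSums_congr h]
  exact h5 f hf

lemma exists_spec {S A : Set ℝ} (hSpos : ∀ x ∈ S, 0 < x) (hA : A ⊆ S)
    {p : Ultrafilter ℝ} (hpp : p + p = p) (hpJ : p ∈ J0 S) (hAp : A ∈ p)
    {δ : ℝ} (hδ : 0 < δ) (prev : Finset (ℕ → ℝ) → ℝ × Finset ℕ) (F : Finset (ℕ → ℝ))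
    (hF : F.Nonempty) (hFT : ↑F ⊆ T0 S) (hE : ChainSums S prev F ⊆ aStar A p) :
    ∃ v, Spec S A p δ prev F v := by
  set E := ChainSums S prev F with hEdef
  set B := aStar A p ∩ ⋂ x ∈ E, {y | x + y ∈ aStar A p} with hBdef
  have hB : B ∈ p := by
    refine Filter.inter_mem (aStar_mem hpp hAp) ?_
    exact (Filter.biInter_mem (chainSums_finite S prev F)).mpr
      fun x hx => aStar_shift hpp (hE hx)
  have hBS : B ⊆ S := fun x hx => hA (aStar_subset A p hx.1)
  have hJ : JSetNearZero S B := hpJ.2 B hBS hB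
  set k := (F.powerset.sup fun G => (prev G).2.sup id) + 1 with hkdef
  set F' := F.image (fun f => fun n => f (n + k)) with hF'def
  have hF'T : ↑F' ⊆ T0 S := by
    intro g hg
    simp only [hF'def, Finset.coe_image, Set.mem_image, Finset.mem_coe] at hg
    obtain ⟨f, hf, rfl⟩ := hg
    exact T0_shift S hSpos (hFT hf) k
  obtain ⟨a, haS, H', hH'ne, hsum⟩ := hJ F' (hF.image _) hF'T δ hδ
  refine ⟨(a, H'.image (· + k)), haS.1, haS.2.2, hH'ne.image _, ?_, ?_⟩
  · intro G hG i hi j hj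
    simp only [Finset.mem_image] at hj
    obtain ⟨t, -, rfl⟩ := hj
    have h1 : i ≤ (prev G).2.sup id := Finset.le_sup (f := id) hi
    have h2 : (prev G).2.sup id ≤ F.powerset.sup fun G => (prev G).2.sup id :=
      Finset.le_sup (f := fun G => (prev G).2.sup id) (Finset.mem_powerset.mpr hG.subset)
    calc i ≤ F.powerset.sup fun G => (prev G).2.sup id := h1.trans h2
      _ < k := by omega
      _ ≤ t + k := Nat.le_add_left _ _
  · intro f hf
    have hsumeq : ∑ t ∈ H'.image (· + k), f t = ∑ t ∈ H', f (t + k) :=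
      Finset.sum_image (fun a _ b _ h => by omega)
    have hmem : a + ∑ t ∈ H', f (t + k) ∈ B :=
      hsum _ (Finset.mem_image_of_mem _ hf)
    rw [hsumeq]
    constructor
    · exact hmem.1
    · intro x hx
      have := hmem.2
      rw [Set.mem_iInter₂] at this
      exact this x hx

/-- The recursive construction of `(α F, H F)`. -/
noncomputable def build (S A : Set ℝ) (p : Ultrafilter ℝ) (δ : ℝ) :
    Finset (ℕ → ℝ) → ℝ × Finset ℕ
  | F =>
    let prev : Finset (ℕ → ℝ) → ℝ × Finset ℕ := fun G =>
      if h : G ⊂ F then build S A p δ G else (0, ∅)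
    if h : ∃ v, Spec S A p δ prev F v then h.choose else (0, ∅)
  termination_by F => F.card
  decreasing_by exact Finset.card_lt_card h

lemma chain_sum_mem {S A : Set ℝ} {p : Ultrafilter ℝ} {δ : ℝ}
    (m : ℕ) (G : Fin (m + 1) → Finset (ℕ → ℝ)) (f : Fin (m + 1) → ℕ → ℝ)
    (hne : ∀ i, (G i).Nonempty) (hT : ∀ i, ↑(G i) ⊆ T0 S)
    (hmono : ∀ i j, i < j → G i ⊂ G j) (hf : ∀ i, f i ∈ G i)
    (hspec : Spec S A p δ (build S A p δ) (G (Fin.last m))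
      (build S A p δ (G (Fin.last m)))) :
    ∑ i, ((build S A p δ (G i)).1 + ∑ t ∈ (build S A p δ (G i)).2, f i t) ∈ aStar A p := by
  cases m with
  | zero =>
    rw [Fin.sum_univ_one]
    exact (hspec.2.2.2.2 (f 0) (hf 0)).1
  | succ n =>
    rw [Fin.sum_univ_castSucc]
    refine (hspec.2.2.2.2 (f (Fin.last (n + 1))) (hf _)).2 _ ?_
    exact ⟨n, fun i => G i.castSucc, fun i => f i.castSucc,
      fun i => hne _, fun i => hT _,
      fun i j hij => hmono _ _ (Fin.castSucc_lt_castSucc_iff.mpr hij),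
      fun i => hf _, hmono _ _ (Fin.castSucc_lt_last _), rfl⟩

lemma build_spec {S A : Set ℝ} (hSpos : ∀ x ∈ S, 0 < x) (hA : A ⊆ S)
    {p : Ultrafilter ℝ} (hpp : p + p = p) (hpJ : p ∈ J0 S) (hAp : A ∈ p)
    {δ : ℝ} (hδ : 0 < δ) :
    ∀ F : Finset (ℕ → ℝ), F.Nonempty → ↑F ⊆ T0 S →
      Spec S A p δ (build S A p δ) F (build S A p δ F) := by
  intro F
  induction F using Finset.strongInduction with
  | _ F ih =>
    intro hF hFT
    set prev : Finset (ℕ → ℝ) → ℝ × Finset ℕ := fun G =>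
      if h : G ⊂ F then build S A p δ G else (0, ∅) with hprevdef
    have hagree : ∀ G, G ⊂ F → prev G = build S A p δ G := fun G hG => dif_pos hG
    have hchain : ChainSums S prev F ⊆ aStar A p := by
      rw [chainSums_congr hagree]
      rintro x ⟨m, G, f, hne, hT, hmono, hf, htop, rfl⟩
      have hGF : ∀ i, G i ⊂ F := chain_mem_ssub hmono htop
      exact chain_sum_mem m G f hne hT hmono hf (ih _ (hGF _) (hne _) (hT _))
    have hex : ∃ v, Spec S A p δ prev F v :=
      exists_spec hSpos hA hpp hpJ hAp hδ prev F hF hFT hchain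
    have hbuild : build S A p δ F = hex.choose := by
      rw [build]
      exact dif_pos hex
    rw [hbuild]
    exact spec_congr hagree hex.choose_spec

end CSetAux

/-- if `A` belongs to some idempotent of `J_0(S)`, then `A` is a
    `C`-set near zero. -/
theorem cSetNearZero_of_idempotent_j0 (S : Set ℝ) (hS : DenseSubsemigroupPos S)
    (A : Set ℝ) (hA : A ⊆ S) (p : Ultrafilter ℝ) (hpp : p + p = p)
    (hpJ : p ∈ J0 S) (hAp : A ∈ p) : CSetNearZero S A := by
  intro δ hδ
  have hδ0 : (0 : ℝ) < δ := hδ.1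
  have hmain := CSetAux.build_spec hS.1 hA hpp hpJ hAp hδ0
  refine ⟨fun F => (CSetAux.build S A p δ F).1, fun F => (CSetAux.build S A p δ F).2,
    ?_, ?_, ?_⟩
  · intro F hF hFT
    obtain ⟨h1, h2, h3, -⟩ := hmain F hF hFT
    exact ⟨h1, h2, h3⟩
  · intro F G hF hFT hG hGT hFG i hi j hj
    exact (hmain G hG hGT).2.2.2.1 F hFG i hi j hj
  · intro m G f hne hT hmono hf
    exact CSetAux.aStar_subset A p
      (CSetAux.chain_sum_mem m G f hne hT hmono hf (hmain (G (Fin.last m)) (hne _) (hT _)))
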